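/- Let ψ⋉ε : G⋉X → H⋉Y be an essential equivalence of translation groupoids. Then the saturation ℸ^{H×H}(Y) of the diagonal Δ(Y) under the (H×H)-action equals the (H×H)-saturation of (ε×ε)(ℸ^{G×G}(X)). -/
import Mathlib


open Set MulAction Function


/-- The coordinatewise action of `G × H` on `X × Y`. -/
instance prodPairMulAction {G H X Y : Type*} [Monoid G] [Monoid H]
    [MulAction G X] [MulAction H Y] : MulAction (G × H) (X × Y) where
  smul a p := (a.1 • p.1, a.2 • p.2)
  one_smul p := by
    show ((1 : G) • p.1, (1 : H) • p.2) = p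
    simp
  mul_smul a b p := by
    show ((a.1 * b.1) • p.1, (a.2 * b.2) • p.2) = (a.1 • b.1 • p.1, a.2 • b.2 • p.2)
    simp [mul_smul]

/-- The saturation of a subset `S` with respect to the `G`-action: the union of
all `G`-orbits meeting `S`. -/
def Saturation (G : Type*) {X : Type*} [SMul G X] (S : Set X) : Set X :=
  {x | ∃ g : G, ∃ s ∈ S, x = g • s}

/-- Essential equivalence of translation groupoids. -/
def IsEssentialEquivalence {G H X Y : Type*} [Group G] [Group H]
    [TopologicalSpace G] [TopologicalSpace H] [TopologicalSpace X] [TopologicalSpace Y]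
    [MulAction G X] [MulAction H Y] (ψ : G →* H) (ε : X → Y) : Prop :=
  Continuous ψ ∧ Continuous ε ∧
  (∀ (g : G) (x : X), ε (g • x) = ψ g • ε x) ∧
  Function.Surjective (fun p : X × H => p.2 • ε p.1) ∧
  IsOpenMap (fun p : X × H => p.2 • ε p.1) ∧
  ∃ e : (G × X) ≃ₜ {q : (H × Y) × (X × X) // ε q.2.1 = q.1.2 ∧ ε q.2.2 = q.1.1 • q.1.2},
    ∀ (g : G) (x : X), ((e (g, x)) : (H × Y) × (X × X)) = ((ψ g, ε x), (x, g • x))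

/-- for an essential equivalence `ψ ⋉ ε : G ⋉ X → H ⋉ Y`, the
saturation `ℸ^{H×H}(Y)` of the diagonal of `Y` equals the `(H × H)`-saturation of
`(ε × ε)(ℸ^{G×G}(X))`. -/
theorem statement15 {G H X Y : Type*} [Group G] [Group H]
    [TopologicalSpace G] [TopologicalSpace H] [TopologicalSpace X] [TopologicalSpace Y]
    [MulAction G X] [MulAction H Y] (ψ : G →* H) (ε : X → Y)
    (hess : IsEssentialEquivalence ψ ε) :
    Saturation (H × H) (Set.diagonal Y)
      = Saturation (H × H)
          (Prod.map ε ε '' Saturation (G × G) (Set.diagonal X)) := by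
  obtain ⟨-, -, hequiv, hsurj, -, -⟩ := hess
  ext p
  constructor
  · rintro ⟨⟨h1, h2⟩, ⟨y1, y2⟩, hy, rfl⟩
    have hy' : y1 = y2 := hy
    subst hy'
    obtain ⟨⟨x, h⟩, hx⟩ := hsurj y1
    simp only at hx
    refine ⟨(h1 * h, h2 * h), (ε x, ε x),
      ⟨(x, x), ⟨(1, 1), (x, x), rfl, by
        show (x, x) = ((1 : G) • x, (1 : G) • x); simp⟩, rfl⟩, ?_⟩
    show (h1 • y1, h2 • y1) = ((h1 * h) • ε x, (h2 * h) • ε x)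
    simp [mul_smul, hx]
  · rintro ⟨⟨h1, h2⟩, s, ⟨p, ⟨⟨g1, g2⟩, ⟨q1, q2⟩, hq, rfl⟩, rfl⟩, rfl⟩
    have hq' : q1 = q2 := hq
    subst hq'
    refine ⟨(h1 * ψ g1, h2 * ψ g2), (ε q1, ε q1), rfl, ?_⟩
    show (h1 • ε (g1 • q1), h2 • ε (g2 • q1))
        = ((h1 * ψ g1) • ε q1, (h2 * ψ g2) • ε q1)
    simp [hequiv, mul_smul]
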